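/- Let $\Omega \subset [0,1]^d$ be such that $\partial\Omega$ admits a finite $(d-1)$-dimensional Minkowski content $\mathcal{M}(\partial\Omega) = \lim_{\epsilon \downarrow 0} \lambda_d((\partial\Omega)_\epsilon)/(2\epsilon)$. Suppose $[0,1]^d$ is partitioned into $n$ measurable cells $E_1,\dots,E_n$ each of Lebesgue measure $1/n$ and diameter at most $2\sqrt{d+3}\,n^{-1/d}$. Let $\mathcal{T}_{\mathrm{bdy}}$ be the set of indices $i$ such that $E_i \cap \Omega \ne \emptyset$ but $E_i \not\subset \Omega$. Then there exists a constant $K$ (depending on $d$ and $\mathcal{M}(\partial\Omega)$) such that $|\mathcal{T}_{\mathrm{bdy}}| \le K n^{1-1/d}$ for all sufficiently large $n$. -/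

import Mathlib

open MeasureTheory ProbabilityTheory Filter Topology
open scoped NNReal ENNReal

/-- The unit cube `[0,1]^d` in Euclidean space. -/
def unitCube (d : ℕ) : Set (EuclideanSpace ℝ (Fin d)) :=
  WithLp.ofLp ⁻¹' Set.univ.pi fun _ => Set.Icc (0 : ℝ) 1

lemma unitCube_isCompact (d : ℕ) : IsCompact (unitCube d) :=
  (PiLp.homeomorph 2 (fun _ : Fin d => ℝ)).isCompact_preimage.mpr
    (isCompact_univ_pi fun _ => isCompact_Icc)

lemma volume_unitCube (d : ℕ) : volume (unitCube d) = 1 := by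
  have h := (EuclideanSpace.volume_preserving_symm_measurableEquiv_toLp (Fin d)).measure_preimage
    (s := Set.univ.pi fun _ : Fin d => Set.Icc (0 : ℝ) 1)
    ((MeasurableSet.univ_pi fun _ => measurableSet_Icc).nullMeasurableSet)
  have heq : (MeasurableEquiv.toLp 2 (Fin d → ℝ)).symm ⁻¹'
      (Set.univ.pi fun _ : Fin d => Set.Icc (0 : ℝ) 1) = unitCube d := rfl
  rw [heq] at h
  rw [h, volume_pi_pi]
  simp [Real.volume_Icc]

/-- A bounded set meeting both `Ω` and its complement is contained in the
`ε`-cthickening of `frontier Ω` for any `ε ≥ diam`. -/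
lemma subset_cthickening_frontier {X : Type*} [NormedAddCommGroup X] [NormedSpace ℝ X]
    {s Ω : Set X} {ε : ℝ} (hb : Bornology.IsBounded s) (hdiam : Metric.diam s ≤ ε)
    (h1 : (s ∩ Ω).Nonempty) (h2 : ¬ s ⊆ Ω) :
    s ⊆ Metric.cthickening ε (frontier Ω) := by
  obtain ⟨a, haS, haΩ⟩ := h1
  obtain ⟨b, hbS, hbΩ⟩ := Set.not_subset.mp h2
  intro x hx
  have hseg : (segment ℝ a b ∩ frontier Ω).Nonempty := by
    by_contra h
    rw [Set.not_nonempty_iff_eq_empty] at h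
    have hsub : segment ℝ a b ⊆ interior Ω ∪ interior Ωᶜ := by
      intro z hz
      have hzf : z ∉ frontier Ω := fun hzf => (Set.eq_empty_iff_forall_notMem.mp h) z ⟨hz, hzf⟩
      by_cases hc : z ∈ closure Ω
      · left
        by_contra hi
        exact hzf ⟨hc, hi⟩
      · right
        rw [interior_compl]
        exact hc
    have hdisj : Disjoint (interior Ω) (interior Ωᶜ) :=
      (disjoint_compl_right.mono interior_subset interior_subset)
    rcases ((convex_segment a b).isPreconnected).subset_or_subset isOpen_interior
        isOpen_interior hdisj hsub with hL | hR
    · exact hbΩ (interior_subset (hL (right_mem_segment ℝ a b)))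
    · exact (interior_subset (hR (left_mem_segment ℝ a b))) haΩ
  obtain ⟨z, hzseg, hzF⟩ := hseg
  have hza : dist x a ≤ ε := le_trans (Metric.dist_le_diam_of_mem hb hx haS) hdiam
  have hzb : dist x b ≤ ε := le_trans (Metric.dist_le_diam_of_mem hb hx hbS) hdiam
  have hball : segment ℝ a b ⊆ Metric.closedBall x ε :=
    (convex_closedBall x ε).segment_subset (by simpa [Metric.mem_closedBall, dist_comm] using hza)
      (by simpa [Metric.mem_closedBall, dist_comm] using hzb)
  exact Metric.mem_cthickening_of_dist_le x z ε _ hzF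
    (by simpa [Metric.mem_closedBall, dist_comm] using hball hzseg)

theorem boundary_cell_count
    (d : ℕ) (hd : 1 ≤ d) (Ω : Set (EuclideanSpace ℝ (Fin d))) (hΩ : Ω ⊆ unitCube d)
    -- `∂Ω` admits a finite `(d-1)`-dimensional Minkowski content `Mink`:
    (Mink : ℝ)
    (hMink : Tendsto (fun ε : ℝ =>
        (volume (Metric.cthickening ε (frontier Ω))).toReal / (2 * ε))
      (𝓝[>] 0) (𝓝 Mink))
    -- a family of partitions of the unit cube into `n` cells:
    (E : (n : ℕ) → Fin n → Set (EuclideanSpace ℝ (Fin d)))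
    (hcover : ∀ n, 1 ≤ n → (⋃ i : Fin n, E n i) = unitCube d)
    (hdisj : ∀ n, 1 ≤ n → Pairwise (Function.onFun Disjoint (E n)))
    (hvol : ∀ n (i : Fin n), volume (E n i) = ENNReal.ofReal (1 / n))
    (hdiam : ∀ n (i : Fin n), 1 ≤ n →
      Metric.diam (E n i) ≤ 2 * Real.sqrt (d + 3) * (n : ℝ) ^ (-(1 : ℝ) / d)) :
    ∃ K : ℝ, ∀ᶠ n : ℕ in atTop,
      ((Set.ncard {i : Fin n | (E n i ∩ Ω).Nonempty ∧ ¬ E n i ⊆ Ω} : ℝ))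
        ≤ K * (n : ℝ) ^ (1 - 1 / (d : ℝ)) := by
  classical
  have hd0 : (0:ℝ) < d := by exact_mod_cast hd
  set ε : ℕ → ℝ := fun n => 2 * Real.sqrt (d + 3) * (n : ℝ) ^ (-(1 : ℝ) / d) with hε
  have hεpos : ∀ n : ℕ, 1 ≤ n → 0 < ε n := by
    intro n hn
    have hn0 : (0:ℝ) < n := by exact_mod_cast hn
    have : (0:ℝ) < Real.sqrt (d + 3) := Real.sqrt_pos.mpr (by positivity)
    positivity
  -- ε n → 0 within (0, ∞)
  have hεlim : Tendsto ε atTop (𝓝[>] (0:ℝ)) := by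
    apply tendsto_nhdsWithin_of_tendsto_nhds_of_eventually_within
    · have h1 : Tendsto (fun x : ℝ => x ^ (-(1:ℝ)/d)) atTop (𝓝 0) := by
        rw [show -(1:ℝ)/d = -(1/d) by ring]
        exact tendsto_rpow_neg_atTop (by positivity)
      have h2 : Tendsto (fun n : ℕ => ((n:ℝ)) ^ (-(1:ℝ)/d)) atTop (𝓝 0) :=
        h1.comp tendsto_natCast_atTop_atTop
      have := h2.const_mul (2 * Real.sqrt (d + 3))
      simpa [hε, mul_assoc] using this
    · filter_upwards [eventually_ge_atTop 1] with n hn using Set.mem_Ioi.mpr (hεpos n hn)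
  -- the frontier has finite-volume cthickenings
  have hFb : Bornology.IsBounded (frontier Ω) := by
    have : frontier Ω ⊆ unitCube d := by
      have h1 : closure Ω ⊆ unitCube d :=
        closure_minimal hΩ (unitCube_isCompact d).isClosed
      exact fun x hx => h1 hx.1
    exact ((unitCube_isCompact d).isBounded).subset this
  -- eventual bound on the thickening volume
  have hlim2 : Tendsto (fun n : ℕ =>
      (volume (Metric.cthickening (ε n) (frontier Ω))).toReal / (2 * ε n)) atTop (𝓝 Mink) :=
    hMink.comp hεlim
  have hev : ∀ᶠ n : ℕ in atTop,
      (volume (Metric.cthickening (ε n) (frontier Ω))).toReal / (2 * ε n) ≤ Mink + 1 :=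
    hlim2.eventually (eventually_le_nhds (by linarith))
  refine ⟨4 * Real.sqrt (d + 3) * (Mink + 1), ?_⟩
  filter_upwards [hev, eventually_ge_atTop 1] with n hvb hn
  have hn0 : (0:ℝ) < n := by exact_mod_cast hn
  set T : Set (Fin n) := {i : Fin n | (E n i ∩ Ω).Nonempty ∧ ¬ E n i ⊆ Ω} with hT
  set S : Finset (Fin n) := Finset.univ.filter (fun i => (E n i ∩ Ω).Nonempty ∧ ¬ E n i ⊆ Ω)
    with hS
  have hcard : T.ncard = S.card := by
    rw [hT, hS]
    rw [Set.ncard_eq_toFinset_card']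
    congr 1
    ext i
    simp [Set.mem_toFinset]
  -- each boundary cell is in the thickening
  have hsubthick : ∀ i ∈ S, E n i ⊆ Metric.cthickening (ε n) (frontier Ω) := by
    intro i hi
    rw [hS, Finset.mem_filter] at hi
    have hbdd : Bornology.IsBounded (E n i) := by
      have : E n i ⊆ unitCube d := by
        rw [← hcover n hn]; exact Set.subset_iUnion _ i
      exact ((unitCube_isCompact d).isBounded).subset this
    exact subset_cthickening_frontier hbdd (hdiam n i hn) hi.2.1 hi.2.2
  -- measure counting: S.card * (1/n) ≤ volume of thickening
  have hkey : (S.card : ℝ≥0∞) * ENNReal.ofReal (1 / n)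
      ≤ volume (Metric.cthickening (ε n) (frontier Ω)) := by
    have hcube : (1 : ℝ≥0∞) ≤ volume (⋃ i ∈ S, E n i) + volume (⋃ i ∈ Sᶜ, E n i) := by
      calc (1 : ℝ≥0∞) = volume (unitCube d) := (volume_unitCube d).symm
        _ ≤ volume ((⋃ i ∈ S, E n i) ∪ (⋃ i ∈ Sᶜ, E n i)) := by
            apply measure_mono
            rw [← hcover n hn]
            intro x hx
            obtain ⟨i, hi⟩ := Set.mem_iUnion.mp hx
            by_cases h : i ∈ S
            · exact Or.inl (Set.mem_biUnion h hi)
            · exact Or.inr (Set.mem_biUnion (Finset.mem_compl.mpr h) hi)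
        _ ≤ _ := measure_union_le _ _
    have hSc : volume (⋃ i ∈ Sᶜ, E n i) ≤ (Sᶜ.card : ℝ≥0∞) * ENNReal.ofReal (1 / n) := by
      calc volume (⋃ i ∈ Sᶜ, E n i) ≤ ∑ i ∈ Sᶜ, volume (E n i) :=
            measure_biUnion_finset_le _ _
        _ = (Sᶜ.card : ℝ≥0∞) * ENNReal.ofReal (1 / n) := by
            simp [hvol n, Finset.sum_const, nsmul_eq_mul]
    have hone : (S.card : ℝ≥0∞) * ENNReal.ofReal (1 / n) +
        (Sᶜ.card : ℝ≥0∞) * ENNReal.ofReal (1 / n) = 1 := by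
      rw [← add_mul]
      have : ((S.card : ℝ≥0∞) + (Sᶜ.card : ℝ≥0∞)) = (n : ℝ≥0∞) := by
        rw [← Nat.cast_add, Finset.card_add_card_compl]
        simp
      rw [this]
      rw [show ((n : ℝ≥0∞)) = ENNReal.ofReal (n : ℝ) by simp,
        ← ENNReal.ofReal_mul (by positivity)]
      rw [mul_one_div, div_self (ne_of_gt hn0), ENNReal.ofReal_one]
    have hST : volume (⋃ i ∈ S, E n i) ≤ volume (Metric.cthickening (ε n) (frontier Ω)) :=
      measure_mono (Set.iUnion₂_subset hsubthick)
    have hfin : (Sᶜ.card : ℝ≥0∞) * ENNReal.ofReal (1 / n) ≠ ∞ := by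
      exact ENNReal.mul_ne_top (by simp) ENNReal.ofReal_ne_top
    have hcomb := le_trans hcube (add_le_add hST hSc)
    have := le_trans (le_of_eq hone) hcomb
    exact (ENNReal.add_le_add_iff_right hfin).mp this
  -- pass to the reals
  have hvolfin : volume (Metric.cthickening (ε n) (frontier Ω)) ≠ ∞ :=
    ne_of_lt (Bornology.IsBounded.measure_lt_top (hFb.cthickening))
  have hkeyR : (S.card : ℝ) * (1 / n) ≤
      (volume (Metric.cthickening (ε n) (frontier Ω))).toReal := by
    have h := ENNReal.toReal_mono hvolfin hkey
    have h2 : ((S.card : ℝ≥0∞) * ENNReal.ofReal (1 / n)).toReal = (S.card : ℝ) * (1 / (n:ℝ)) := by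
      rw [ENNReal.toReal_mul, ENNReal.toReal_ofReal (by positivity)]
      simp
    rwa [h2] at h
  -- conclude
  have hεn : 0 < ε n := hεpos n hn
  have hvb' : (volume (Metric.cthickening (ε n) (frontier Ω))).toReal ≤ (Mink + 1) * (2 * ε n) :=
    (div_le_iff₀ (by positivity)).mp hvb
  have hcR : (S.card : ℝ) ≤ (Mink + 1) * (2 * ε n) * n := by
    have h1 : (S.card : ℝ) * (1 / n) ≤ (Mink + 1) * (2 * ε n) := le_trans hkeyR hvb'
    calc (S.card : ℝ) = (S.card : ℝ) * (1 / n) * n := by field_simp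
      _ ≤ (Mink + 1) * (2 * ε n) * n := by
          exact mul_le_mul_of_nonneg_right h1 (le_of_lt hn0)
  have hrpow : (n : ℝ) ^ ((1:ℝ) - 1 / d) = (n : ℝ) * (n : ℝ) ^ (-(1:ℝ) / d) := by
    rw [show (1:ℝ) - 1/d = 1 + (-(1:ℝ)/d) by ring, Real.rpow_add hn0, Real.rpow_one]
  rw [hcard]
  calc (S.card : ℝ) ≤ (Mink + 1) * (2 * ε n) * n := hcR
    _ = 4 * Real.sqrt (d + 3) * (Mink + 1) * ((n : ℝ) * (n : ℝ) ^ (-(1:ℝ) / d)) := by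
        rw [hε]; ring
    _ = 4 * Real.sqrt (d + 3) * (Mink + 1) * (n : ℝ) ^ (1 - 1 / (d:ℝ)) := by
        rw [hrpow]
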